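/- Multiplication law of exponential Riordan arrays: let g, u, f, v be formal power series over ℚ with constant coefficient of f and of v equal to 0, and for power series G, F with F(0)=0 define T(G,F)(n,k) = (n!/k!)·(coefficient of X^n in G·F^k) ∈ ℚ. Then for all natural numbers n and k, ∑_{j=0}^{n} T(g,f)(n,j) · T(u,v)(j,k) = T(g·(u∘f), v∘f)(n,k), where u∘f and v∘f denote substitution of f into u and v respectively. -/

import Mathlib

open PowerSeries Finset

/-- Substitution (composition) of formal power series: `substPS f u = u ∘ f`,
the usual composition `∑ₙ uₙ fⁿ`, well-defined coefficient-wise when `f` has zero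
constant coefficient (in that case `coeff n (f^j) = 0` for `j > n`). -/
noncomputable def substPS (f u : PowerSeries ℚ) : PowerSeries ℚ :=
  PowerSeries.mk fun n => ∑ j ∈ Finset.range (n + 1),
    (PowerSeries.coeff j u) * PowerSeries.coeff n (f ^ j)

/-- The `(n,k)` entry of the exponential Riordan array `[G, F]`. -/
noncomputable def riordanEntry (G F : PowerSeries ℚ) (n k : ℕ) : ℚ :=
  ((n.factorial : ℚ) / (k.factorial : ℚ)) * PowerSeries.coeff n (G * F ^ k)

/-- Evaluation of a polynomial at a power series. -/
noncomputable def evalPS (f : PowerSeries ℚ) (p : Polynomial ℚ) : PowerSeries ℚ :=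
  p.eval₂ PowerSeries.C f

lemma aux_coeff_pow {f : PowerSeries ℚ} (hf : PowerSeries.constantCoeff f = 0) :
    ∀ j m : ℕ, m < j → PowerSeries.coeff m (f ^ j) = 0 := by
  intro j
  induction j with
  | zero => intro m hm; exact absurd hm (Nat.not_lt_zero m)
  | succ j ih =>
    intro m hm
    rw [pow_succ, PowerSeries.coeff_mul]
    refine Finset.sum_eq_zero ?_
    rintro ⟨p, q⟩ hpq
    rw [Finset.HasAntidiagonal.mem_antidiagonal] at hpq
    rcases Nat.eq_zero_or_pos q with hq | hq
    · subst hq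
      simp only [PowerSeries.coeff_zero_eq_constantCoeff, hf, mul_zero]
    · have hp : p < j := by omega
      rw [ih p hp, zero_mul]

lemma aux_coeff_mul_pow {f : PowerSeries ℚ} (hf : PowerSeries.constantCoeff f = 0)
    (g : PowerSeries ℚ) (j m : ℕ) (hm : m < j) :
    PowerSeries.coeff m (g * f ^ j) = 0 := by
  rw [PowerSeries.coeff_mul]
  refine Finset.sum_eq_zero ?_
  rintro ⟨p, q⟩ hpq
  rw [Finset.HasAntidiagonal.mem_antidiagonal] at hpq
  have hq : q < j := by omega
  rw [aux_coeff_pow hf j q hq, mul_zero]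

theorem riordan_mul (g u f v : PowerSeries ℚ)
    (hf : PowerSeries.constantCoeff f = 0)
    (hv : PowerSeries.constantCoeff v = 0) (n k : ℕ) :
    ∑ j ∈ Finset.range (n + 1), riordanEntry g f n j * riordanEntry u v j k
      = riordanEntry (g * substPS f u) (substPS f v) n k := by
  classical
  set N := n + 1 with hNdef
  have hnN : n < N := Nat.lt_succ_self n
  -- sub-claim A: coefficients of substPS below N agree with evalPS of the truncation
  have hA : ∀ (w : PowerSeries ℚ) (m : ℕ), m < N →
      PowerSeries.coeff m (substPS f w)
        = PowerSeries.coeff m (evalPS f (PowerSeries.trunc N w)) := by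
    intro w m hm
    have hE : evalPS f (PowerSeries.trunc N w)
        = ∑ i ∈ Finset.range N, PowerSeries.C (PowerSeries.coeff i w) * f ^ i :=
      PowerSeries.eval₂_trunc_eq_sum_range f PowerSeries.C N w
    rw [hE, map_sum]
    simp only [PowerSeries.coeff_C_mul]
    rw [substPS, PowerSeries.coeff_mk]
    refine Finset.sum_subset (Finset.range_subset_range.mpr (by omega)) ?_
    intro j hj hj'
    have hmj : m < j := by
      rw [Finset.mem_range, not_lt] at hj'; omega
    rw [aux_coeff_pow hf j m hmj, mul_zero]
  -- truncation version of sub-claim A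
  have htr : ∀ w : PowerSeries ℚ,
      PowerSeries.trunc N (substPS f w)
        = PowerSeries.trunc N (evalPS f (PowerSeries.trunc N w)) := by
    intro w
    ext m
    rw [PowerSeries.coeff_trunc, PowerSeries.coeff_trunc]
    split_ifs with h
    · exact hA w m h
    · rfl
  -- key: coefficient n of g * evalPS f p as a finite sum
  have hK : ∀ p : Polynomial ℚ,
      PowerSeries.coeff n (g * evalPS f p)
        = ∑ j ∈ Finset.range N, p.coeff j * PowerSeries.coeff n (g * f ^ j) := by
    intro p
    have hE : evalPS f p = ∑ j ∈ p.support, PowerSeries.C (p.coeff j) * f ^ j := by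
      rw [evalPS, Polynomial.eval₂_eq_sum, Polynomial.sum_def]
    rw [hE, Finset.mul_sum, map_sum]
    have hterm : ∀ j : ℕ,
        PowerSeries.coeff n (g * (PowerSeries.C (p.coeff j) * f ^ j))
          = p.coeff j * PowerSeries.coeff n (g * f ^ j) := by
      intro j
      rw [mul_left_comm, PowerSeries.coeff_C_mul]
    simp only [hterm]
    have h1 : ∑ j ∈ p.support, p.coeff j * PowerSeries.coeff n (g * f ^ j)
        = ∑ j ∈ p.support ∪ Finset.range N, p.coeff j * PowerSeries.coeff n (g * f ^ j) :=
      Finset.sum_subset Finset.subset_union_left (fun j _ hj => by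
        rw [Polynomial.notMem_support_iff.mp hj, zero_mul])
    have h2 : ∑ j ∈ Finset.range N, p.coeff j * PowerSeries.coeff n (g * f ^ j)
        = ∑ j ∈ p.support ∪ Finset.range N, p.coeff j * PowerSeries.coeff n (g * f ^ j) :=
      Finset.sum_subset Finset.subset_union_right (fun j hj hj' => by
        have hnj : n < j := by rw [Finset.mem_range, not_lt] at hj'; omega
        rw [aux_coeff_mul_pow hf g j n hnj, mul_zero])
    rw [h1, ← h2]
  -- the polynomial P
  set P : Polynomial ℚ :=
    PowerSeries.trunc N u * (PowerSeries.trunc N v) ^ k with hPdef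
  have hPcoeff : ∀ j : ℕ, j < N → P.coeff j = PowerSeries.coeff j (u * v ^ k) := by
    intro j hj
    have h1 : P.coeff j
        = PowerSeries.coeff j
            ((↑(PowerSeries.trunc N u) : PowerSeries ℚ)
              * (↑(PowerSeries.trunc N v) : PowerSeries ℚ) ^ k) := by
      rw [← Polynomial.coeff_coe, hPdef]
      push_cast
      ring_nf
    rw [h1,
      PowerSeries.coeff_mul_eq_coeff_trunc_mul_trunc₂ _ _ hj hj,
      PowerSeries.trunc_trunc, PowerSeries.trunc_trunc_pow,
      ← PowerSeries.coeff_mul_eq_coeff_trunc_mul_trunc₂ u (v ^ k) hj hj]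
  -- sub-claim B: coefficients of substPS f u * (substPS f v)^k below N
  have hB : ∀ m : ℕ, m < N →
      PowerSeries.coeff m (substPS f u * (substPS f v) ^ k)
        = PowerSeries.coeff m (evalPS f P) := by
    intro m hm
    have hEP : evalPS f P
        = evalPS f (PowerSeries.trunc N u) * (evalPS f (PowerSeries.trunc N v)) ^ k := by
      rw [hPdef, evalPS, Polynomial.eval₂_mul, Polynomial.eval₂_pow]
      rfl
    rw [hEP,
      PowerSeries.coeff_mul_eq_coeff_trunc_mul_trunc₂ _ _ hm hm,
      PowerSeries.coeff_mul_eq_coeff_trunc_mul_trunc₂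
        (evalPS f (PowerSeries.trunc N u)) _ hm hm,
      htr u, ← PowerSeries.trunc_trunc_pow (substPS f v) N k, htr v,
      PowerSeries.trunc_trunc_pow]
  -- main computation for the right-hand side coefficient
  have hmain : PowerSeries.coeff n ((g * substPS f u) * (substPS f v) ^ k)
      = ∑ j ∈ Finset.range N,
          PowerSeries.coeff j (u * v ^ k) * PowerSeries.coeff n (g * f ^ j) := by
    have hassoc : (g * substPS f u) * (substPS f v) ^ k
        = g * (substPS f u * (substPS f v) ^ k) := by ring
    rw [hassoc,
      PowerSeries.coeff_mul_eq_coeff_trunc_mul_trunc₂ g _ hnN hnN]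
    have htrB : PowerSeries.trunc N (substPS f u * (substPS f v) ^ k)
        = PowerSeries.trunc N (evalPS f P) := by
      ext m
      rw [PowerSeries.coeff_trunc, PowerSeries.coeff_trunc]
      split_ifs with h
      · exact hB m h
      · rfl
    rw [htrB,
      ← PowerSeries.coeff_mul_eq_coeff_trunc_mul_trunc₂ g (evalPS f P) hnN hnN,
      hK P]
    refine Finset.sum_congr rfl ?_
    intro j hj
    rw [Finset.mem_range] at hj
    rw [hPcoeff j hj]
  -- put everything together
  rw [riordanEntry, hmain, Finset.mul_sum]
  refine Finset.sum_congr rfl ?_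
  intro j hj
  rw [riordanEntry, riordanEntry]
  have hj0 : (Nat.factorial j : ℚ) ≠ 0 := Nat.cast_ne_zero.mpr (Nat.factorial_ne_zero j)
  have hk0 : (Nat.factorial k : ℚ) ≠ 0 := Nat.cast_ne_zero.mpr (Nat.factorial_ne_zero k)
  field_simp
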